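/- arXiv:2001.02608 — 6 statements merged into one kernel-verified Lean document; each statement's English description precedes it below -/
import Mathlib

section
/- Let R, S, T be groups, let U be a subgroup of R × S and V a subgroup of S × T, and let W = U * V. Set M = p₂(U) ∩ p₁(V) and let N be the subgroup of S generated by p₂(U) ∩ k₁(V) and k₂(U) ∩ p₁(V). Then N is a normal subgroup of M, and there are group isomorphisms p₁(W)/k₁(W) ≅ M/N and M/N ≅ p₂(W)/k₂(W). -/
open scoped Classical

namespace SubgroupCat

variable {R S T : Type*}

/-- The star product of subgroups `U ≤ R × S` and `V ≤ S × T`: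
`U * V = {(r, t) | ∃ s, (r, s) ∈ U ∧ (s, t) ∈ V}`. -/
def starProd [Group R] [Group S] [Group T] (U : Subgroup (R × S)) (V : Subgroup (S × T)) :
    Subgroup (R × T) where
  carrier := {rt | ∃ s : S, (rt.1, s) ∈ U ∧ (s, rt.2) ∈ V}
  one_mem' := ⟨1, one_mem U, one_mem V⟩
  mul_mem' := by
    rintro a b ⟨s, hU, hV⟩ ⟨s', hU', hV'⟩
    exact ⟨s * s', mul_mem hU hU', mul_mem hV hV'⟩
  inv_mem' := by
    rintro a ⟨s, hU, hV⟩
    exact ⟨s⁻¹, inv_mem hU, inv_mem hV⟩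

@[simp] lemma mem_starProd [Group R] [Group S] [Group T] {U : Subgroup (R × S)}
    {V : Subgroup (S × T)} {p : R × T} :
    p ∈ starProd U V ↔ ∃ s : S, (p.1, s) ∈ U ∧ (s, p.2) ∈ V := Iff.rfl

/-- First projection `p₁(U) = {r | ∃ s, (r, s) ∈ U}`. -/
def p1 [Group R] [Group S] (U : Subgroup (R × S)) : Subgroup R :=
  U.map (MonoidHom.fst R S)

/-- Second projection `p₂(U) = {s | ∃ r, (r, s) ∈ U}`. -/
def p2 [Group R] [Group S] (U : Subgroup (R × S)) : Subgroup S :=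
  U.map (MonoidHom.snd R S)

/-- First kernel `k₁(U) = {r | (r, 1) ∈ U}`. -/
def k1 [Group R] [Group S] (U : Subgroup (R × S)) : Subgroup R :=
  U.comap (MonoidHom.inl R S)

/-- Second kernel `k₂(U) = {s | (1, s) ∈ U}`. -/
def k2 [Group R] [Group S] (U : Subgroup (R × S)) : Subgroup S :=
  U.comap (MonoidHom.inr R S)

/-- `k₁(U)` is a normal subgroup of `p₁(U)`. -/
instance k1_normal [Group R] [Group S] (U : Subgroup (R × S)) :
    ((k1 U).subgroupOf (p1 U)).Normal := by
  constructor
  intro n hn g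
  rw [Subgroup.mem_subgroupOf] at hn ⊢
  obtain ⟨x, hx, h1⟩ := g.2
  have hn1 : ((n : R), (1 : S)) ∈ U := hn
  have key : (x * ((n : R), (1 : S)) * x⁻¹) ∈ U := mul_mem (mul_mem hx hn1) (inv_mem hx)
  have key' : ((x.1 * (n : R) * x.1⁻¹ : R), (1 : S)) ∈ U := by
    simpa [Prod.mul_def, Prod.inv_mk, Prod.ext_iff] using key
  have h1' : x.1 = (g : R) := h1
  show ((↑(g * n * g⁻¹) : R), (1 : S)) ∈ U
  push_cast
  rw [← h1']
  exact key'

/-- `k₂(U)` is a normal subgroup of `p₂(U)`. -/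
instance k2_normal [Group R] [Group S] (U : Subgroup (R × S)) :
    ((k2 U).subgroupOf (p2 U)).Normal := by
  constructor
  intro n hn g
  rw [Subgroup.mem_subgroupOf] at hn ⊢
  obtain ⟨x, hx, h1⟩ := g.2
  have hn1 : ((1 : R), (n : S)) ∈ U := hn
  have key : (x * ((1 : R), (n : S)) * x⁻¹) ∈ U := mul_mem (mul_mem hx hn1) (inv_mem hx)
  have key' : ((1 : R), (x.2 * (n : S) * x.2⁻¹ : S)) ∈ U := by
    simpa [Prod.mul_def, Prod.inv_mk, Prod.ext_iff] using key
  have h1' : x.2 = (g : S) := h1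
  show ((1 : R), (↑(g * n * g⁻¹) : S)) ∈ U
  push_cast
  rw [← h1']
  exact key'

section Aux

variable [Group R] [Group S] [Group T]

lemma mem_p1' {U : Subgroup (R × S)} {r : R} : r ∈ p1 U ↔ ∃ s, (r, s) ∈ U := by
  constructor
  · rintro ⟨⟨a, b⟩, h, rfl⟩; exact ⟨b, h⟩
  · rintro ⟨s, h⟩; exact ⟨(r, s), h, rfl⟩

lemma mem_p2' {U : Subgroup (R × S)} {s : S} : s ∈ p2 U ↔ ∃ r, (r, s) ∈ U := by
  constructor
  · rintro ⟨⟨a, b⟩, h, rfl⟩; exact ⟨a, h⟩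
  · rintro ⟨r, h⟩; exact ⟨(r, s), h, rfl⟩

lemma mem_k1' {U : Subgroup (R × S)} {r : R} : r ∈ k1 U ↔ (r, (1 : S)) ∈ U := Iff.rfl

lemma mem_k2' {U : Subgroup (R × S)} {s : S} : s ∈ k2 U ↔ ((1 : R), s) ∈ U := Iff.rfl

lemma k1_le_p1 {U : Subgroup (R × S)} : k1 U ≤ p1 U := fun r h => mem_p1'.2 ⟨1, h⟩

lemma k2_le_p2 {U : Subgroup (R × S)} : k2 U ≤ p2 U := fun s h => mem_p2'.2 ⟨1, h⟩

variable {U : Subgroup (R × S)} {V : Subgroup (S × T)}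

lemma conjA {m a : S} (hm : m ∈ p2 U ⊓ p1 V) (ha : a ∈ p2 U ⊓ k1 V) :
    m * a * m⁻¹ ∈ p2 U ⊓ k1 V := by
  obtain ⟨hm2, hm1⟩ := hm
  obtain ⟨ha2, ha1⟩ := ha
  obtain ⟨r, hr⟩ := mem_p2'.1 hm2
  obtain ⟨r', hr'⟩ := mem_p2'.1 ha2
  obtain ⟨t, ht⟩ := mem_p1'.1 hm1
  refine ⟨mem_p2'.2 ⟨r * r' * r⁻¹, ?_⟩, mem_k1'.2 ?_⟩
  · have := mul_mem (mul_mem hr hr') (inv_mem hr)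
    simpa [Prod.ext_iff] using this
  · have ha1' : ((a, 1) : S × T) ∈ V := mem_k1'.1 ha1
    have := mul_mem (mul_mem ht ha1') (inv_mem ht)
    simpa [Prod.ext_iff] using this

lemma conjB {m b : S} (hm : m ∈ p2 U ⊓ p1 V) (hb : b ∈ k2 U ⊓ p1 V) :
    m * b * m⁻¹ ∈ k2 U ⊓ p1 V := by
  obtain ⟨hm2, hm1⟩ := hm
  obtain ⟨hb2, hb1⟩ := hb
  obtain ⟨r, hr⟩ := mem_p2'.1 hm2
  obtain ⟨t, ht⟩ := mem_p1'.1 hm1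
  obtain ⟨t', ht'⟩ := mem_p1'.1 hb1
  refine ⟨mem_k2'.2 ?_, mem_p1'.2 ⟨t * t' * t⁻¹, ?_⟩⟩
  · have hb2' : ((1, b) : R × S) ∈ U := mem_k2'.1 hb2
    have := mul_mem (mul_mem hr hb2') (inv_mem hr)
    simpa [Prod.ext_iff] using this
  · have := mul_mem (mul_mem ht ht') (inv_mem ht)
    simpa [Prod.ext_iff] using this

lemma mem_N_iff {s : S} :
    s ∈ (p2 U ⊓ k1 V) ⊔ (k2 U ⊓ p1 V) ↔
      ∃ a ∈ p2 U ⊓ k1 V, ∃ b ∈ k2 U ⊓ p1 V, s = a * b := by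
  constructor
  · intro hs
    let P : Subgroup S :=
      { carrier := {x | ∃ a ∈ p2 U ⊓ k1 V, ∃ b ∈ k2 U ⊓ p1 V, x = a * b}
        one_mem' := ⟨1, one_mem _, 1, one_mem _, (mul_one 1).symm⟩
        mul_mem' := by
          rintro x y ⟨a, ha, b, hb, rfl⟩ ⟨a', ha', b', hb', rfl⟩
          have hM : a' ∈ p2 U ⊓ p1 V := ⟨ha'.1, k1_le_p1 ha'.2⟩
          refine ⟨a * a', mul_mem ha ha', (a'⁻¹ * b * a') * b', mul_mem ?_ hb', by group⟩
          have := conjB (inv_mem hM) hb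
          simpa using this
        inv_mem' := by
          rintro x ⟨a, ha, b, hb, rfl⟩
          have hM : a ∈ p2 U ⊓ p1 V := ⟨ha.1, k1_le_p1 ha.2⟩
          exact ⟨a⁻¹, inv_mem ha, a * b⁻¹ * a⁻¹, conjB hM (inv_mem hb), by group⟩ }
    have hle : (p2 U ⊓ k1 V) ⊔ (k2 U ⊓ p1 V) ≤ P := by
      refine sup_le ?_ ?_
      · intro a ha; exact ⟨a, ha, 1, one_mem _, (mul_one a).symm⟩
      · intro b hb; exact ⟨1, one_mem _, b, hb, (one_mul b).symm⟩
    exact hle hs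
  · rintro ⟨a, ha, b, hb, rfl⟩
    exact mul_mem (Subgroup.mem_sup_left ha) (Subgroup.mem_sup_right hb)

instance N_normal :
    (((p2 U ⊓ k1 V) ⊔ (k2 U ⊓ p1 V)).subgroupOf (p2 U ⊓ p1 V)).Normal := by
  constructor
  intro n hn g
  rw [Subgroup.mem_subgroupOf] at hn ⊢
  obtain ⟨a, ha, b, hb, hab⟩ := mem_N_iff.1 hn
  have key : ((↑(g * n * g⁻¹) : S)) = ((g : S) * a * (g : S)⁻¹) * ((g : S) * b * (g : S)⁻¹) := by
    push_cast
    rw [hab]; group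
  exact mem_N_iff.2 ⟨_, conjA g.2 ha, _, conjB g.2 hb, key⟩

end Aux

/-- Let `W = U * V`, `M = p₂(U) ∩ p₁(V)` and let `N` be the subgroup generated by
`p₂(U) ∩ k₁(V)` and `k₂(U) ∩ p₁(V)`.  Then `N ⊴ M` and
`p₁(W)/k₁(W) ≅ M/N ≅ p₂(W)/k₂(W)`. -/
theorem butterfly_star (R S T : Type*) [Group R] [Group S] [Group T]
    (U : Subgroup (R × S)) (V : Subgroup (S × T)) :
    (p2 U ⊓ k1 V) ⊔ (k2 U ⊓ p1 V) ≤ p2 U ⊓ p1 V ∧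
    ∃ _ : (((p2 U ⊓ k1 V) ⊔ (k2 U ⊓ p1 V)).subgroupOf (p2 U ⊓ p1 V)).Normal,
      Nonempty
        ((p1 (starProd U V) ⧸ (k1 (starProd U V)).subgroupOf (p1 (starProd U V))) ≃*
          (↥(p2 U ⊓ p1 V) ⧸ ((p2 U ⊓ k1 V) ⊔ (k2 U ⊓ p1 V)).subgroupOf (p2 U ⊓ p1 V))) ∧
      Nonempty
        ((↥(p2 U ⊓ p1 V) ⧸ ((p2 U ⊓ k1 V) ⊔ (k2 U ⊓ p1 V)).subgroupOf (p2 U ⊓ p1 V)) ≃*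
          (p2 (starProd U V) ⧸ (k2 (starProd U V)).subgroupOf (p2 (starProd U V)))) := by
  have hNM : (p2 U ⊓ k1 V) ⊔ (k2 U ⊓ p1 V) ≤ p2 U ⊓ p1 V := by
    refine sup_le ?_ ?_
    · exact fun a ha => ⟨ha.1, k1_le_p1 ha.2⟩
    · exact fun b hb => ⟨k2_le_p2 hb.1, hb.2⟩
  refine ⟨hNM, N_normal, ⟨?_⟩, ⟨?_⟩⟩
  -- First isomorphism: p₁(W)/k₁(W) ≅ M/N
  · let U' : Subgroup (R × S) := U ⊓ (p1 V).comap (MonoidHom.snd R S)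
    have hU'mem : ∀ x : R × S, x ∈ U' ↔ x ∈ U ∧ x.2 ∈ p1 V := fun x => Iff.rfl
    have hg0 : ∀ x : U', ((MonoidHom.fst R S).comp U'.subtype) x ∈ p1 (starProd U V) := by
      rintro ⟨⟨r, s⟩, hU, hV⟩
      obtain ⟨t, ht⟩ := mem_p1'.1 hV
      exact mem_p1'.2 ⟨t, ⟨s, hU, ht⟩⟩
    have hf0 : ∀ x : U', ((MonoidHom.snd R S).comp U'.subtype) x ∈ p2 U ⊓ p1 V := by
      rintro ⟨⟨r, s⟩, hU, hV⟩
      exact ⟨mem_p2'.2 ⟨r, hU⟩, hV⟩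
    let g : U' →* (p1 (starProd U V) ⧸ (k1 (starProd U V)).subgroupOf (p1 (starProd U V))) :=
      (QuotientGroup.mk' _).comp
        (((MonoidHom.fst R S).comp U'.subtype).codRestrict _ hg0)
    let f : U' →* (↥(p2 U ⊓ p1 V) ⧸
        ((p2 U ⊓ k1 V) ⊔ (k2 U ⊓ p1 V)).subgroupOf (p2 U ⊓ p1 V)) :=
      (QuotientGroup.mk' _).comp
        (((MonoidHom.snd R S).comp U'.subtype).codRestrict _ hf0)
    have hgsurj : Function.Surjective g := by
      intro q
      obtain ⟨⟨r, hr⟩, rfl⟩ := QuotientGroup.mk'_surjective _ q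
      obtain ⟨t, s, hU, hV⟩ := mem_p1'.1 hr
      exact ⟨⟨(r, s), hU, mem_p1'.2 ⟨t, hV⟩⟩, rfl⟩
    have hfsurj : Function.Surjective f := by
      intro q
      obtain ⟨⟨m, hm⟩, rfl⟩ := QuotientGroup.mk'_surjective _ q
      obtain ⟨r, hU⟩ := mem_p2'.1 hm.1
      exact ⟨⟨(r, m), hU, hm.2⟩, rfl⟩
    have hker : g.ker = f.ker := by
      ext x
      obtain ⟨⟨r, s⟩, hx⟩ := x
      obtain ⟨hU, hVc⟩ := Subgroup.mem_inf.1 hx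
      have hV : s ∈ p1 V := hVc
      have h1 : (⟨(r, s), hx⟩ : U') ∈ g.ker ↔ r ∈ k1 (starProd U V) := by
        rw [MonoidHom.mem_ker]
        show QuotientGroup.mk _ = 1 ↔ _
        rw [QuotientGroup.eq_one_iff, Subgroup.mem_subgroupOf]
        exact Iff.rfl
      have h2 : (⟨(r, s), hx⟩ : U') ∈ f.ker ↔
          s ∈ (p2 U ⊓ k1 V) ⊔ (k2 U ⊓ p1 V) := by
        rw [MonoidHom.mem_ker]
        show QuotientGroup.mk _ = 1 ↔ _
        rw [QuotientGroup.eq_one_iff, Subgroup.mem_subgroupOf]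
        exact Iff.rfl
      rw [h1, h2]
      constructor
      · intro hk
        obtain ⟨s', hU', hV'⟩ := mem_k1'.1 hk
        refine mem_N_iff.2 ⟨s', ⟨mem_p2'.2 ⟨r, hU'⟩, mem_k1'.2 hV'⟩,
          s'⁻¹ * s, Subgroup.mem_inf.2
            ⟨mem_k2'.2 ?_, mul_mem (inv_mem (k1_le_p1 (mem_k1'.2 hV'))) hV⟩,
          by group⟩
        have := mul_mem (inv_mem hU') hU
        simpa [Prod.ext_iff] using this
      · intro hn
        obtain ⟨a, ha, b, hb, hab⟩ := mem_N_iff.1 hn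
        refine mem_k1'.2 ⟨a, ?_, mem_k1'.1 ha.2⟩
        have hbU : ((1 : R), b) ∈ U := mem_k2'.1 hb.1
        have := mul_mem hU (inv_mem hbU)
        simpa [Prod.ext_iff, hab] using this
    exact (QuotientGroup.quotientKerEquivOfSurjective g hgsurj).symm.trans
      ((QuotientGroup.quotientMulEquivOfEq hker).trans
        (QuotientGroup.quotientKerEquivOfSurjective f hfsurj))
  -- Second isomorphism: M/N ≅ p₂(W)/k₂(W)
  · let V' : Subgroup (S × T) := V ⊓ (p2 U).comap (MonoidHom.fst S T)
    have hf0 : ∀ x : V', ((MonoidHom.fst S T).comp V'.subtype) x ∈ p2 U ⊓ p1 V := by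
      rintro ⟨⟨s, t⟩, hV, hU⟩
      exact ⟨hU, mem_p1'.2 ⟨t, hV⟩⟩
    have hg0 : ∀ x : V', ((MonoidHom.snd S T).comp V'.subtype) x ∈ p2 (starProd U V) := by
      rintro ⟨⟨s, t⟩, hV, hU⟩
      obtain ⟨r, hr⟩ := mem_p2'.1 hU
      exact mem_p2'.2 ⟨r, ⟨s, hr, hV⟩⟩
    let f : V' →* (↥(p2 U ⊓ p1 V) ⧸
        ((p2 U ⊓ k1 V) ⊔ (k2 U ⊓ p1 V)).subgroupOf (p2 U ⊓ p1 V)) :=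
      (QuotientGroup.mk' _).comp
        (((MonoidHom.fst S T).comp V'.subtype).codRestrict _ hf0)
    let g : V' →* (p2 (starProd U V) ⧸ (k2 (starProd U V)).subgroupOf (p2 (starProd U V))) :=
      (QuotientGroup.mk' _).comp
        (((MonoidHom.snd S T).comp V'.subtype).codRestrict _ hg0)
    have hfsurj : Function.Surjective f := by
      intro q
      obtain ⟨⟨m, hm⟩, rfl⟩ := QuotientGroup.mk'_surjective _ q
      obtain ⟨t, hV⟩ := mem_p1'.1 hm.2
      exact ⟨⟨(m, t), hV, hm.1⟩, rfl⟩
    have hgsurj : Function.Surjective g := by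
      intro q
      obtain ⟨⟨t, ht⟩, rfl⟩ := QuotientGroup.mk'_surjective _ q
      obtain ⟨r, s, hU, hV⟩ := mem_p2'.1 ht
      exact ⟨⟨(s, t), hV, mem_p2'.2 ⟨r, hU⟩⟩, rfl⟩
    have hker : f.ker = g.ker := by
      ext x
      obtain ⟨⟨s, t⟩, hx⟩ := x
      obtain ⟨hV, hUc⟩ := Subgroup.mem_inf.1 hx
      have hU : s ∈ p2 U := hUc
      have h1 : (⟨(s, t), hx⟩ : V') ∈ f.ker ↔
          s ∈ (p2 U ⊓ k1 V) ⊔ (k2 U ⊓ p1 V) := by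
        rw [MonoidHom.mem_ker]
        show QuotientGroup.mk _ = 1 ↔ _
        rw [QuotientGroup.eq_one_iff, Subgroup.mem_subgroupOf]
        exact Iff.rfl
      have h2 : (⟨(s, t), hx⟩ : V') ∈ g.ker ↔ t ∈ k2 (starProd U V) := by
        rw [MonoidHom.mem_ker]
        show QuotientGroup.mk _ = 1 ↔ _
        rw [QuotientGroup.eq_one_iff, Subgroup.mem_subgroupOf]
        exact Iff.rfl
      rw [h1, h2]
      constructor
      · intro hn
        obtain ⟨a, ha, b, hb, hab⟩ := mem_N_iff.1 hn
        refine mem_k2'.2 ⟨b, mem_k2'.1 hb.1, ?_⟩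
        have haV : (a, (1 : T)) ∈ V := mem_k1'.1 ha.2
        have := mul_mem (inv_mem haV) hV
        simpa [Prod.ext_iff, hab] using this
      · intro hk
        obtain ⟨s'', hU'', hV''⟩ := mem_k2'.1 hk
        refine mem_N_iff.2 ⟨s * s''⁻¹, Subgroup.mem_inf.2
            ⟨mul_mem hU (inv_mem (mem_p2'.2 ⟨(1 : R), hU''⟩)), mem_k1'.2 ?_⟩,
          s'', Subgroup.mem_inf.2 ⟨mem_k2'.2 hU'', mem_p1'.2 ⟨t, hV''⟩⟩, by group⟩
        have := mul_mem hV (inv_mem hV'')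
        simpa [Prod.ext_iff] using this
    exact (QuotientGroup.quotientKerEquivOfSurjective f hfsurj).symm.trans
      ((QuotientGroup.quotientMulEquivOfEq hker).trans
        (QuotientGroup.quotientKerEquivOfSurjective g hgsurj))

end SubgroupCat
end

section
/- Let R and S be groups, let U be a subgroup of R × S, and let E = p₁(U)/k₁(U) be the thorax of U. Then U factorizes through E: there exist a subgroup X of R × E and a subgroup Y of E × S such that U = X * Y. -/
open scoped Classical

namespace SubgroupCat

variable {R S T : Type*}

/-- Every subgroup `U ≤ R × S` factorizes through its thorax `E = p₁(U)/k₁(U)`: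
there are `X ≤ R × E` and `Y ≤ E × S` with `U = X * Y`. -/
theorem factorize_through_thorax (R S : Type*) [Group R] [Group S] (U : Subgroup (R × S)) :
    ∃ (X : Subgroup (R × (p1 U ⧸ (k1 U).subgroupOf (p1 U))))
      (Y : Subgroup ((p1 U ⧸ (k1 U).subgroupOf (p1 U)) × S)),
      U = starProd X Y := by
  classical
  set N := (k1 U).subgroupOf (p1 U) with hN
  let q : p1 U →* p1 U ⧸ N := QuotientGroup.mk' N
  let φ : (p1 U : Subgroup R) →* R × (p1 U ⧸ N) := ((p1 U).subtype).prod q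
  let π : U →* p1 U :=
    { toFun := fun u => ⟨u.1.1, ⟨u.1, u.2, rfl⟩⟩
      map_one' := rfl
      map_mul' := fun _ _ => rfl }
  let ψ : U →* (p1 U ⧸ N) × S := (q.comp π).prod ((MonoidHom.snd R S).comp U.subtype)
  refine ⟨φ.range, ψ.range, ?_⟩
  ext ⟨r, s⟩
  constructor
  · intro h
    have hr : r ∈ p1 U := ⟨(r, s), h, rfl⟩
    refine ⟨q ⟨r, hr⟩, ⟨⟨r, hr⟩, rfl⟩, ⟨⟨(r, s), h⟩, ?_⟩⟩
    have : π ⟨(r, s), h⟩ = ⟨r, hr⟩ := rfl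
    simp [ψ, this]
  · rintro ⟨e, ⟨a, ha⟩, ⟨u, hu⟩⟩
    have ha1 : (a : R) = r := congrArg Prod.fst ha
    have ha2 : q a = e := congrArg Prod.snd ha
    have hu1 : q (π u) = e := congrArg Prod.fst hu
    have hu2 : (u : R × S).2 = s := congrArg Prod.snd hu
    have hq : q a = q (π u) := ha2.trans hu1.symm
    have hmem : a⁻¹ * π u ∈ N := by
      rw [QuotientGroup.mk'_eq_mk'] at hq
      obtain ⟨z, hz, hz'⟩ := hq
      simpa [← hz', mul_assoc] using hz
    have hk : ((((a⁻¹ * π u : p1 U) : R)), (1 : S)) ∈ U := hmem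
    have hval : (((a⁻¹ * π u : p1 U)) : R) = r⁻¹ * (u : R × S).1 := by
      simp [π, ha1]
    rw [hval] at hk
    have h2 : ((u : R × S).1⁻¹ * r, (1 : S)) ∈ U := by
      simpa [mul_inv_rev] using inv_mem hk
    have h3 := mul_mem u.2 h2
    have : ((u : R × S).1 * ((u : R × S).1⁻¹ * r), (u : R × S).2 * 1) ∈ U := h3
    simpa [mul_inv_cancel_left, hu2] using this


end SubgroupCat
end

section
/- Let R be a finite group. For an automorphism θ of R, let Δ(θ) = {(θ(r), r) : r ∈ R}, a subgroup of R × R, and write Δ(R) = Δ(id). Then: (i) Δ(θ ∘ φ) = Δ(θ) * Δ(φ) for all automorphisms θ, φ of R; (ii) the map θ ↦ Δ(θ) is injective; (iii) a subgroup U of R × R satisfies U * V = Δ(R) = V * U for some subgroup V of R × R if and only if U = Δ(θ) for some automorphism θ of R. In particular, θ ↦ Δ(θ) is a group isomorphism from Aut(R) onto the group of invertible elements of the monoid of subgroups of R × R under the star product with identity Δ(R). -/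
open scoped Classical

namespace SubgroupCat

variable {R S T : Type*}

/-- The subgroup `{(f x, x) : x ∈ L}` of `E × L`, the graph of `f : L →* E`. -/
def graphL {E L : Type*} [Group E] [Group L] (f : L →* E) : Subgroup (E × L) :=
  (f.prod (MonoidHom.id L)).range

/-- The subgroup `{(x, f x) : x ∈ L}` of `L × E`, the graph of `f : L →* E`. -/
def graphR {E L : Type*} [Group E] [Group L] (f : L →* E) : Subgroup (L × E) :=
  ((MonoidHom.id L).prod f).range

/-- The diagonal subgroup `Δ(E) = {(e, e)} ≤ E × E`. -/
def diagSubgroup (E : Type*) [Group E] : Subgroup (E × E) :=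
  graphL (MonoidHom.id E)

/-- The graph `Δ(θ) = {(θ r, r) : r ∈ R}` of an automorphism `θ` of `R`. -/
def deltaAut {R : Type*} [Group R] (θ : MulAut R) : Subgroup (R × R) :=
  graphL θ.toMonoidHom

@[simp] lemma mem_deltaAut {R : Type*} [Group R] {θ : MulAut R} {p : R × R} :
    p ∈ deltaAut θ ↔ ∃ x : R, θ x = p.1 ∧ x = p.2 := by
  constructor
  · rintro ⟨x, hx⟩
    exact ⟨x, congrArg Prod.fst hx, congrArg Prod.snd hx⟩
  · rintro ⟨x, h1, h2⟩
    exact ⟨x, Prod.ext h1 h2⟩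

@[simp] lemma mem_diagSubgroup {R : Type*} [Group R] {p : R × R} :
    p ∈ diagSubgroup R ↔ p.1 = p.2 := by
  constructor
  · rintro ⟨x, hx⟩
    rw [← hx]
    rfl
  · rintro h
    exact ⟨p.2, Prod.ext h.symm rfl⟩

/-- The monoid of subgroups of `R × R` under the star product, with identity
`Δ(R)`. -/
def starMonoid (R : Type*) [Group R] : Monoid (Subgroup (R × R)) where
  mul := starProd
  one := diagSubgroup R
  mul_assoc U V W := by
    show starProd (starProd U V) W = starProd U (starProd V W)
    ext p
    simp only [mem_starProd]
    constructor
    · rintro ⟨s, ⟨t, hU, hV⟩, hW⟩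
      exact ⟨t, hU, s, hV, hW⟩
    · rintro ⟨t, hU, s, hV, hW⟩
      exact ⟨s, ⟨t, hU, hV⟩, hW⟩
  one_mul U := by
    show starProd (diagSubgroup R) U = U
    ext p
    simp only [mem_starProd, mem_diagSubgroup]
    constructor
    · rintro ⟨s, h1, h2⟩
      cases h1
      exact h2
    · intro h
      exact ⟨p.1, rfl, h⟩
  mul_one U := by
    show starProd U (diagSubgroup R) = U
    ext p
    simp only [mem_starProd, mem_diagSubgroup]
    constructor
    · rintro ⟨s, h1, h2⟩
      cases h2
      exact h1
    · intro h
      exact ⟨p.2, h, rfl⟩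

lemma deltaAut_mul {R : Type*} [Group R] (θ φ : MulAut R) :
    deltaAut (θ * φ) = starProd (deltaAut θ) (deltaAut φ) := by
  ext p
  simp only [mem_starProd, mem_deltaAut]
  constructor
  · rintro ⟨x, h1, h2⟩
    exact ⟨φ x, ⟨φ x, h1, rfl⟩, ⟨x, rfl, h2⟩⟩
  · rintro ⟨s, ⟨x, hx1, hx2⟩, ⟨y, hy1, hy2⟩⟩
    exact ⟨y, by simp [MulAut.mul_apply, hy1, hx2 ▸ hx1], hy2⟩

lemma deltaAut_one {R : Type*} [Group R] : deltaAut (1 : MulAut R) = diagSubgroup R := by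
  ext p
  simp only [mem_deltaAut, mem_diagSubgroup, MulAut.one_apply]
  constructor
  · rintro ⟨x, h1, h2⟩; exact h1 ▸ h2
  · intro h; exact ⟨p.2, h.symm, rfl⟩

lemma deltaAut_injective {R : Type*} [Group R] :
    Function.Injective (deltaAut : MulAut R → Subgroup (R × R)) := by
  intro θ φ h
  ext x
  have : (θ x, x) ∈ deltaAut φ := h ▸ (mem_deltaAut.mpr ⟨x, rfl, rfl⟩)
  obtain ⟨y, h1, h2⟩ := mem_deltaAut.mp this
  exact (h2 ▸ h1).symm

lemma exists_aut_of_inv {R : Type*} [Group R] {U V : Subgroup (R × R)}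
    (h1 : starProd U V = diagSubgroup R) (h2 : starProd V U = diagSubgroup R) :
    ∃ θ : MulAut R, U = deltaAut θ := by
  have hUV : ∀ p : R × R, (∃ s, (p.1, s) ∈ U ∧ (s, p.2) ∈ V) ↔ p.1 = p.2 := by
    intro p
    rw [← mem_starProd (U := U) (V := V), h1, mem_diagSubgroup]
  have hVU : ∀ p : R × R, (∃ s, (p.1, s) ∈ V ∧ (s, p.2) ∈ U) ↔ p.1 = p.2 := by
    intro p
    rw [← mem_starProd (U := V) (V := U), h2, mem_diagSubgroup]
  -- triviality of the left kernel
  have ker1 : ∀ r : R, (r, 1) ∈ U → r = 1 := by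
    intro r hr
    obtain ⟨s, hs1, hs2⟩ := (hUV (1, 1)).mpr rfl
    have : ((r, 1) * (1, s) : R × R) ∈ U := mul_mem hr hs1
    simp only [Prod.mk_mul_mk, mul_one, one_mul] at this
    exact (hUV (r, 1)).mp ⟨s, this, hs2⟩
  -- triviality of the right kernel
  have ker2 : ∀ t : R, (1, t) ∈ U → t = 1 := by
    intro t ht
    obtain ⟨s, hs1, hs2⟩ := (hVU (1, 1)).mpr rfl
    have : ((s, 1) * (1, t) : R × R) ∈ U := mul_mem hs2 ht
    simp only [Prod.mk_mul_mk, mul_one, one_mul] at this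
    exact ((hVU (1, t)).mp ⟨s, hs1, this⟩).symm
  -- uniqueness of first coordinate
  have uniq : ∀ r r' t : R, (r, t) ∈ U → (r', t) ∈ U → r = r' := by
    intro r r' t hr hr'
    have : ((r, t) * (r', t)⁻¹ : R × R) ∈ U := mul_mem hr (inv_mem hr')
    simp only [Prod.mk_mul_mk, Prod.inv_mk, mul_inv_cancel] at this
    have := ker1 _ this
    exact mul_inv_eq_one.mp this
  -- existence: for each t there is r with (r, t) ∈ U
  have hex : ∀ t : R, ∃ r : R, (r, t) ∈ U := by
    intro t
    obtain ⟨s, _, hs2⟩ := (hVU (t, t)).mpr rfl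
    exact ⟨s, hs2⟩
  choose f hf using hex
  have hmul : ∀ a b : R, f (a * b) = f a * f b := by
    intro a b
    have : ((f a, a) * (f b, b) : R × R) ∈ U := mul_mem (hf a) (hf b)
    exact uniq _ _ _ (hf (a * b)) this
  have hinj : Function.Injective f := by
    intro a b h
    have : ((f a, a)⁻¹ * (f b, b) : R × R) ∈ U := mul_mem (inv_mem (hf a)) (hf b)
    simp only [Prod.inv_mk, Prod.mk_mul_mk, h, inv_mul_cancel] at this
    have := ker2 _ this
    exact (inv_mul_eq_one.mp this)
  have hsurj : Function.Surjective f := by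
    intro r
    obtain ⟨s, hs1, _⟩ := (hUV (r, r)).mpr rfl
    exact ⟨s, uniq _ _ _ (hf s) hs1⟩
  let θ : MulAut R := MulEquiv.ofBijective (MonoidHom.mk' f hmul) ⟨hinj, hsurj⟩
  refine ⟨θ, ?_⟩
  ext p
  rw [mem_deltaAut]
  constructor
  · intro hp
    exact ⟨p.2, uniq _ _ _ (hf p.2) hp, rfl⟩
  · rintro ⟨x, h1, h2⟩
    have : (f x, x) ∈ U := hf x
    rw [show θ x = f x from rfl] at h1
    rw [h1, h2] at this
    exact this

/-- For a finite group `R`: (i) `Δ(θ ∘ φ) = Δ(θ) * Δ(φ)`; (ii) `θ ↦ Δ(θ)` is injective;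
(iii) `U ≤ R × R` is invertible for the star product iff `U = Δ(θ)` for some `θ ∈ Aut(R)`;
in particular `θ ↦ Δ(θ)` is a group isomorphism from `Aut(R)` onto the group of
invertible elements of the monoid of subgroups of `R × R` under the star product. -/
theorem deltaAut_monoid_iso (R : Type*) [Group R] [Finite R] :
    (∀ θ φ : MulAut R, deltaAut (θ * φ) = starProd (deltaAut θ) (deltaAut φ)) ∧
    Function.Injective (deltaAut : MulAut R → Subgroup (R × R)) ∧
    (∀ U : Subgroup (R × R),
      (∃ V : Subgroup (R × R),
          starProd U V = diagSubgroup R ∧ starProd V U = diagSubgroup R) ↔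
        ∃ θ : MulAut R, U = deltaAut θ) ∧
    (letI : Monoid (Subgroup (R × R)) := starMonoid R
     ∃ e : MulAut R ≃* (Subgroup (R × R))ˣ,
       ∀ θ : MulAut R, ((e θ : (Subgroup (R × R))ˣ) : Subgroup (R × R)) = deltaAut θ) := by
  refine ⟨deltaAut_mul, deltaAut_injective, ?_, ?_⟩
  · intro U
    constructor
    · rintro ⟨V, h1, h2⟩
      exact exists_aut_of_inv h1 h2
    · rintro ⟨θ, rfl⟩
      refine ⟨deltaAut θ⁻¹, ?_, ?_⟩
      · rw [← deltaAut_mul, mul_inv_cancel, deltaAut_one]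
      · rw [← deltaAut_mul, inv_mul_cancel, deltaAut_one]
  · letI : Monoid (Subgroup (R × R)) := starMonoid R
    have hmulS : ∀ U V : Subgroup (R × R), U * V = starProd U V := fun _ _ => rfl
    have honeS : (1 : Subgroup (R × R)) = diagSubgroup R := rfl
    let F : MulAut R →* (Subgroup (R × R))ˣ := MonoidHom.mk'
      (fun θ => ⟨deltaAut θ, deltaAut θ⁻¹,
        by rw [hmulS, ← deltaAut_mul, mul_inv_cancel, deltaAut_one, honeS],
        by rw [hmulS, ← deltaAut_mul, inv_mul_cancel, deltaAut_one, honeS]⟩)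
      (by
        intro θ φ
        apply Units.ext
        show deltaAut (θ * φ) = deltaAut θ * deltaAut φ
        rw [hmulS, deltaAut_mul])
    have hbij : Function.Bijective F := by
      constructor
      · intro θ φ h
        exact deltaAut_injective (congrArg Units.val h)
      · intro u
        have h1 : starProd (u : Subgroup (R × R)) ↑u⁻¹ = diagSubgroup R := u.mul_inv
        have h2 : starProd (↑u⁻¹ : Subgroup (R × R)) u = diagSubgroup R := u.inv_mul
        obtain ⟨θ, hθ⟩ := exists_aut_of_inv h1 h2
        exact ⟨θ, Units.ext hθ.symm⟩
    exact ⟨MulEquiv.ofBijective F hbij, fun θ => rfl⟩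

end SubgroupCat
end

section
/- Let 𝕂 be a field of characteristic zero and let ℓ be a homomorphism of monoids from the positive integers under multiplication to the unit group 𝕂ˣ; for a finite group A write ℓ(A) = ℓ(|A|). For finite groups and subgroups U ≤ F × G, V ≤ G × H define σ(U, V) = ℓ(k₂(U) ∩ k₁(V)). Then for all finite groups F, G, H, I and all subgroups U ≤ F × G, V ≤ G × H, W ≤ H × I, one has σ(U, V * W) · σ(V, W) = σ(U, V) · σ(U * V, W); that is, σ is a cocycle for the subgroup category on finite groups. -/
open scoped Classical

namespace SubgroupCat

variable {R S T : Type*}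

/-- `ℓ(A) = ℓ(|A|)` for a finite group `A`, where `ℓ : ℕ⁺ →* 𝕂ˣ`. -/
noncomputable def ellG {𝕂 : Type*} [Field 𝕂] (ℓ : ℕ+ →* 𝕂ˣ) (A : Type*) [Group A] [Finite A] :
    𝕂 :=
  (ℓ ⟨Nat.card A, Nat.card_pos⟩ : 𝕂ˣ)

/-- The cocycle `σ(U, V) = ℓ(k₂(U) ∩ k₁(V))`. -/
noncomputable def sigmaC {𝕂 : Type*} [Field 𝕂] (ℓ : ℕ+ →* 𝕂ˣ)
    {F G H : Type*} [Group F] [Group G] [Group H] [Finite G]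
    (U : Subgroup (F × G)) (V : Subgroup (G × H)) : 𝕂 :=
  ellG ℓ ↑(k2 U ⊓ k1 V)

section Aux

variable {G H : Type*} [Group G] [Group H]

/-- Auxiliary subgroup of `G × H`. -/
def auxX {F I : Type*} [Group F] [Group I] (U : Subgroup (F × G)) (V : Subgroup (G × H))
    (W : Subgroup (H × I)) : Subgroup (G × H) where
  carrier := {p | ((1 : F), p.1) ∈ U ∧ p ∈ V ∧ (p.2, (1 : I)) ∈ W}
  one_mem' := ⟨one_mem U, one_mem V, one_mem W⟩
  mul_mem' := by
    rintro a b ⟨ha1, ha2, ha3⟩ ⟨hb1, hb2, hb3⟩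
    exact ⟨by simpa using mul_mem ha1 hb1, mul_mem ha2 hb2, by simpa using mul_mem ha3 hb3⟩
  inv_mem' := by
    rintro a ⟨h1, h2, h3⟩
    exact ⟨by simpa using inv_mem h1, inv_mem h2, by simpa using inv_mem h3⟩

/-- Card of a finite group is card of range times card of kernel. -/
lemma card_eq_range_mul_ker {X Y : Type*} [Group X] [Group Y] [Finite X] (f : X →* Y) :
    Nat.card X = Nat.card f.range * Nat.card f.ker := by
  rw [← Subgroup.card_mul_index f.ker, Subgroup.index_ker, Nat.mul_comm]

end Aux

/-- `σ` is a cocycle for the subgroup category on finite groups: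
`σ(U, V * W) · σ(V, W) = σ(U, V) · σ(U * V, W)`. -/
theorem sigma_cocycle {𝕂 : Type*} [Field 𝕂] [CharZero 𝕂] (ℓ : ℕ+ →* 𝕂ˣ)
    (F G H I : Type*) [Group F] [Group G] [Group H] [Group I]
    [Finite F] [Finite G] [Finite H] [Finite I]
    (U : Subgroup (F × G)) (V : Subgroup (G × H)) (W : Subgroup (H × I)) :
    sigmaC ℓ U (starProd V W) * sigmaC ℓ V W = sigmaC ℓ U V * sigmaC ℓ (starProd U V) W := by
  set X := auxX U V W
  -- first projection
  have h1 : Nat.card (k2 U ⊓ k1 (starProd V W) : Subgroup G)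
      * Nat.card (k2 V ⊓ k1 W : Subgroup H) = Nat.card X := by
    set f : X →* G := (MonoidHom.fst G H).comp X.subtype
    have hrange : f.range = k2 U ⊓ k1 (starProd V W) := by
      ext g
      constructor
      · rintro ⟨⟨⟨g', h⟩, hx1, hx2, hx3⟩, rfl⟩
        exact ⟨hx1, ⟨h, hx2, hx3⟩⟩
      · rintro ⟨hg, h, hv, hw⟩
        exact ⟨⟨⟨g, h⟩, hg, hv, hw⟩, rfl⟩
    have hker : Nat.card f.ker = Nat.card (k2 V ⊓ k1 W : Subgroup H) := by
      refine Nat.card_congr ⟨fun x => ⟨x.1.1.2, ?_⟩, fun h => ⟨⟨⟨1, h.1⟩, ?_⟩, rfl⟩,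
        fun x => ?_, fun h => rfl⟩
      · obtain ⟨⟨⟨g, h⟩, hx1, hx2, hx3⟩, (hg : g = 1)⟩ := x
        subst hg
        exact ⟨hx2, hx3⟩
      · obtain ⟨h, hv, hw⟩ := h
        exact ⟨by exact one_mem U, hv, hw⟩
      · obtain ⟨⟨⟨g, h⟩, hx⟩, (hg : g = 1)⟩ := x
        subst hg
        rfl
    rw [card_eq_range_mul_ker f, hrange, hker]
  -- second projection
  have h2 : Nat.card (k2 U ⊓ k1 V : Subgroup G)
      * Nat.card (k2 (starProd U V) ⊓ k1 W : Subgroup H) = Nat.card X := by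
    set f : X →* H := (MonoidHom.snd G H).comp X.subtype
    have hrange : f.range = k2 (starProd U V) ⊓ k1 W := by
      ext h
      constructor
      · rintro ⟨⟨⟨g, h'⟩, hx1, hx2, hx3⟩, rfl⟩
        exact ⟨⟨g, hx1, hx2⟩, hx3⟩
      · rintro ⟨⟨g, hu, hv⟩, hw⟩
        exact ⟨⟨⟨g, h⟩, hu, hv, hw⟩, rfl⟩
    have hker : Nat.card f.ker = Nat.card (k2 U ⊓ k1 V : Subgroup G) := by
      refine Nat.card_congr ⟨fun x => ⟨x.1.1.1, ?_⟩, fun g => ⟨⟨⟨g.1, 1⟩, ?_⟩, rfl⟩,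
        fun x => ?_, fun g => rfl⟩
      · obtain ⟨⟨⟨g, h⟩, hx1, hx2, hx3⟩, (hh : h = 1)⟩ := x
        subst hh
        exact ⟨hx1, hx2⟩
      · obtain ⟨g, hg⟩ := g
        exact ⟨hg.1, hg.2, by exact one_mem W⟩
      · obtain ⟨⟨⟨g, h⟩, hx⟩, (hh : h = 1)⟩ := x
        subst hh
        rfl
    rw [card_eq_range_mul_ker f, hrange, hker, Nat.mul_comm]
  -- conclude
  have key : (⟨Nat.card (k2 U ⊓ k1 (starProd V W) : Subgroup G), Nat.card_pos⟩ : ℕ+)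
      * ⟨Nat.card (k2 V ⊓ k1 W : Subgroup H), Nat.card_pos⟩
      = (⟨Nat.card (k2 U ⊓ k1 V : Subgroup G), Nat.card_pos⟩ : ℕ+)
      * ⟨Nat.card (k2 (starProd U V) ⊓ k1 W : Subgroup H), Nat.card_pos⟩ := by
    apply PNat.coe_injective
    show Nat.card _ * Nat.card _ = Nat.card _ * Nat.card _
    exact h1.trans h2.symm
  simp only [sigmaC, ellG]
  rw [← Units.val_mul, ← Units.val_mul]
  exact congrArg Units.val ((map_mul ℓ _ _).symm.trans ((congrArg ℓ key).trans (map_mul ℓ _ _)))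

end SubgroupCat
end

section
/- Let P be a partially ordered set such that for every u ∈ P the set {v ∈ P : v ≤ u} is finite, and let A be an abelian group. Let ρ : P → P be a monotone map satisfying ρ(ρ(u)) = ρ(u) ≤ u for all u ∈ P (a downward retraction), and let σ : P → A be a function with σ(ρ(u)) = σ(u) for all u ∈ P. Suppose τ : P → A satisfies σ(u) = Σ_{v ≤ u} τ(v) for all u ∈ P, and suppose τ' : P → A satisfies σ(u) = Σ_{v ≤ u, v ∈ ρ(P)} τ'(v) for all u in the image ρ(P). Then τ(v) = τ'(v) for every v ∈ ρ(P), and τ(v) = 0 for every v ∈ P not in ρ(P). -/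
open scoped Classical

/-- **Boltje–Danz.** Let `P` be a poset all of whose principal order ideals are finite,
`A` an abelian group, `ρ` a downward retraction of `P`, and `σ : P → A` a function with
`σ ∘ ρ = σ`.  If `τ` is the totient function of `σ` on `P` and `τ'` is the totient function
of the restriction of `σ` to the image `ρ(P)`, then `τ` agrees with `τ'` on `ρ(P)` and
vanishes off `ρ(P)`. -/
theorem retraction_totient {P : Type*} [PartialOrder P]
    (hfin : ∀ u : P, {v : P | v ≤ u}.Finite)
    {A : Type*} [AddCommGroup A] (ρ : P → P) (hmono : Monotone ρ)
    (hidem : ∀ u, ρ (ρ u) = ρ u) (hdown : ∀ u, ρ u ≤ u)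
    (σ : P → A) (hσ : ∀ u, σ (ρ u) = σ u)
    (τ : P → A) (hτ : ∀ u, σ u = ∑ᶠ v ∈ {v : P | v ≤ u}, τ v)
    (τ' : P → A)
    (hτ' : ∀ u ∈ Set.range ρ, σ u = ∑ᶠ v ∈ {v : P | v ≤ u ∧ v ∈ Set.range ρ}, τ' v) :
    (∀ v ∈ Set.range ρ, τ v = τ' v) ∧ (∀ v ∉ Set.range ρ, τ v = 0) := by
  -- every element of the range is a fixed point of ρ
  have hfix : ∀ v ∈ Set.range ρ, ρ v = v := by
    rintro v ⟨w, rfl⟩; exact hidem w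
  have hflt : ∀ u : P, {v : P | v < u}.Finite :=
    fun u => (hfin u).subset fun v hv => le_of_lt hv
  -- finset versions
  have hS : ∀ u : P, σ u = ∑ v ∈ (hfin u).toFinset, τ v := by
    intro u
    rw [hτ u, finsum_mem_eq_finite_toFinset_sum τ (hfin u)]
  have hS' : ∀ u ∈ Set.range ρ,
      σ u = ∑ v ∈ (hfin u).toFinset.filter (· ∈ Set.range ρ), τ' v := by
    intro u hu
    have hfin2 : {v : P | v ≤ u ∧ v ∈ Set.range ρ}.Finite :=
      (hfin u).subset fun v hv => hv.1
    rw [hτ' u hu, finsum_mem_eq_finite_toFinset_sum τ' hfin2]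
    apply Finset.sum_congr _ (fun _ _ => rfl)
    ext v; simp [Set.Finite.mem_toFinset]
  -- decompose the ideal at u as u together with the strict ideal
  have hins : ∀ u : P, (hfin u).toFinset = insert u (hflt u).toFinset := by
    intro u
    ext v
    simp only [Set.Finite.mem_toFinset, Finset.mem_insert, Set.mem_setOf_eq]
    constructor
    · intro h; rcases eq_or_lt_of_le h with h | h
      · exact Or.inl h
      · exact Or.inr h
    · rintro (rfl | h)
      · exact le_rfl
      · exact le_of_lt h
  have hsplit : ∀ u : P, σ u = τ u + ∑ v ∈ (hflt u).toFinset, τ v := by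
    intro u
    rw [hS u, hins u, Finset.sum_insert (by simp [Set.Finite.mem_toFinset])]
  -- main induction
  have key : ∀ n : ℕ, ∀ u : P, (hflt u).toFinset.card < n →
      (u ∈ Set.range ρ → τ u = τ' u) ∧ (u ∉ Set.range ρ → τ u = 0) := by
    intro n
    induction n with
    | zero => intro u hu; omega
    | succ n ih =>
      intro u hu
      have IH : ∀ v, v < u →
          (v ∈ Set.range ρ → τ v = τ' v) ∧ (v ∉ Set.range ρ → τ v = 0) := by
        intro v hv
        apply ih
        have hsub : (hflt v).toFinset ⊆ (hflt u).toFinset := by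
          intro w hw
          simp only [Set.Finite.mem_toFinset, Set.mem_setOf_eq] at hw ⊢
          exact lt_trans hw hv
        have hne : v ∈ (hflt u).toFinset ∧ v ∉ (hflt v).toFinset := by
          simp [Set.Finite.mem_toFinset, hv]
        have : (hflt v).toFinset.card < (hflt u).toFinset.card :=
          Finset.card_lt_card (Finset.ssubset_iff_of_subset hsub |>.mpr ⟨v, hne.1, hne.2⟩)
        omega
      constructor
      · -- u in range
        intro hu'
        have hfu : ρ u = u := hfix u hu'
        have h1 := hsplit u
        have h2 := hS' u hu'
        have h3 : (hfin u).toFinset.filter (· ∈ Set.range ρ) =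
            insert u ((hflt u).toFinset.filter (· ∈ Set.range ρ)) := by
          rw [hins u, Finset.filter_insert, if_pos hu']
        rw [h3, Finset.sum_insert (by simp [Set.Finite.mem_toFinset])] at h2
        -- sum over strict ideal of τ equals sum over filtered strict ideal of τ'
        have h4 : ∑ v ∈ (hflt u).toFinset, τ v =
            ∑ v ∈ (hflt u).toFinset.filter (· ∈ Set.range ρ), τ' v := by
          rw [← Finset.sum_filter_add_sum_filter_not (hflt u).toFinset (· ∈ Set.range ρ) τ]
          have hz : ∑ v ∈ (hflt u).toFinset.filter (fun v => ¬ v ∈ Set.range ρ), τ v = 0 := by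
            apply Finset.sum_eq_zero
            intro v hv
            simp only [Finset.mem_filter, Set.Finite.mem_toFinset, Set.mem_setOf_eq] at hv
            exact (IH v hv.1).2 hv.2
          rw [hz, add_zero]
          apply Finset.sum_congr rfl
          intro v hv
          simp only [Finset.mem_filter, Set.Finite.mem_toFinset, Set.mem_setOf_eq] at hv
          exact (IH v hv.1).1 hv.2
        rw [h4] at h1
        have := h1.symm.trans h2
        exact add_right_cancel this
      · -- u not in range
        intro hu'
        have hlt : ρ u < u :=
          lt_of_le_of_ne (hdown u) (fun h => hu' ⟨u, h⟩)
        have h1 := hsplit u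
        have h2 := hS (ρ u)
        -- the ideal of ρ u sits inside the strict ideal of u
        have hsub : (hfin (ρ u)).toFinset ⊆ (hflt u).toFinset := by
          intro w hw
          simp only [Set.Finite.mem_toFinset, Set.mem_setOf_eq] at hw ⊢
          exact lt_of_le_of_lt hw hlt
        have h3 : ∑ v ∈ (hflt u).toFinset, τ v = ∑ v ∈ (hfin (ρ u)).toFinset, τ v := by
          symm
          apply Finset.sum_subset hsub
          intro v hv hv'
          simp only [Set.Finite.mem_toFinset, Set.mem_setOf_eq] at hv hv'
          apply (IH v hv).2
          intro hvr
          apply hv'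
          calc v = ρ v := (hfix v hvr).symm
            _ ≤ ρ u := hmono (le_of_lt hv)
        rw [h3, ← h2, hσ u] at h1
        have : τ u + σ u = 0 + σ u := by rw [zero_add]; exact h1.symm
        exact add_right_cancel this
  refine ⟨fun v hv => (key ((hflt v).toFinset.card + 1) v (by omega)).1 hv,
    fun v hv => (key ((hflt v).toFinset.card + 1) v (by omega)).2 hv⟩
end

section
/- Let F, G, H be finite groups and let U ≤ F × G and V ≤ G × H be subgroups. Then |U| · |V| = |p₂(U) · p₁(V)| · |k₂(U) ∩ k₁(V)| · |U * V|, where p₂(U) · p₁(V) denotes the product set {x·y : x ∈ p₂(U), y ∈ p₁(V)} in G and |·| denotes cardinality. -/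
open scoped Classical

namespace SubgroupCat

variable {R S T : Type*}

section Aux

variable {F G H : Type*} [Group F] [Group G] [Group H]
variable (U : Subgroup (F × G)) (V : Subgroup (G × H))

/-- The "matching" subgroup of `U × V`. -/
def Xsub : Subgroup (↥U × ↥V) where
  carrier := {p | (p.1 : F × G).2 = (p.2 : G × H).1}
  one_mem' := rfl
  mul_mem' := by
    rintro a b ha hb
    simp only [Set.mem_setOf_eq] at *
    simp [Prod.snd_mul, Prod.fst_mul, ha, hb]
  inv_mem' := by
    rintro a ha
    simp only [Set.mem_setOf_eq] at *
    simp [ha]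

/-- Hom from `Xsub` to `F × H`. -/
def phi : ↥(Xsub U V) →* F × H where
  toFun x := ((x.val.1 : F × G).1, (x.val.2 : G × H).2)
  map_one' := rfl
  map_mul' := by intro a b; rfl

lemma range_phi : (phi U V).range = starProd U V := by
  ext p
  constructor
  · rintro ⟨x, rfl⟩
    refine ⟨(x.val.1 : F × G).2, ?_, ?_⟩
    · exact x.val.1.2
    · have hx : (x.val.1 : F × G).2 = (x.val.2 : G × H).1 := x.2
      rw [hx]
      exact x.val.2.2
  · rintro ⟨s, hU, hV⟩
    exact ⟨⟨(⟨(p.1, s), hU⟩, ⟨(s, p.2), hV⟩), rfl⟩, rfl⟩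

/-- The kernel of `phi` is equivalent to `k2 U ⊓ k1 V`. -/
def kerEquiv : ↥(phi U V).ker ≃ ↥(k2 U ⊓ k1 V) where
  toFun x := ⟨(x.val.val.1 : F × G).2, by
    have hk : phi U V x.val = 1 := x.2
    have h1 : (x.val.val.1 : F × G).1 = 1 := congrArg Prod.fst hk
    have h2 : (x.val.val.2 : G × H).2 = 1 := congrArg Prod.snd hk
    have hx : (x.val.val.1 : F × G).2 = (x.val.val.2 : G × H).1 := x.val.2
    constructor
    · show ((1 : F), (x.val.val.1 : F × G).2) ∈ U
      have := x.val.val.1.2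
      rwa [show ((1 : F), (x.val.val.1 : F × G).2) = (x.val.val.1 : F × G) by
        rw [← h1]] 
    · show ((x.val.val.1 : F × G).2, (1 : H)) ∈ V
      have := x.val.val.2.2
      rwa [show ((x.val.val.1 : F × G).2, (1 : H)) = (x.val.val.2 : G × H) by
        rw [hx, ← h2]]⟩
  invFun g := ⟨⟨(⟨(1, g.val), g.2.1⟩, ⟨(g.val, 1), g.2.2⟩), rfl⟩, by
    show phi U V _ = 1
    rfl⟩
  left_inv := by
    rintro ⟨⟨⟨u, v⟩, hx⟩, hk⟩
    have h1 : (u : F × G).1 = 1 := congrArg Prod.fst hk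
    have h2 : (v : G × H).2 = 1 := congrArg Prod.snd hk
    have hx' : (u : F × G).2 = (v : G × H).1 := hx
    refine Subtype.ext (Subtype.ext (Prod.ext (Subtype.ext ?_) (Subtype.ext ?_)))
    · exact Prod.ext h1.symm rfl
    · exact Prod.ext hx' h2.symm
  right_inv := by rintro ⟨g, hg⟩; rfl

lemma card_Xsub : Nat.card ↥(Xsub U V) =
    Nat.card ↥(starProd U V) * Nat.card ↥(k2 U ⊓ k1 V) := by
  rw [Subgroup.card_eq_card_quotient_mul_card_subgroup (phi U V).ker]
  congr 1
  · rw [Nat.card_congr (QuotientGroup.quotientKerEquivRange (phi U V)).toEquiv, range_phi]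
  · exact Nat.card_congr (kerEquiv U V)

/-- The map whose fibers are left cosets of `Xsub`. -/
def fmap : ↥U × ↥V → G := fun p => (p.1 : F × G).2 * ((p.2 : G × H).1)⁻¹

lemma fmap_resp : ∀ a b : ↥U × ↥V, QuotientGroup.leftRel (Xsub U V) a b → fmap U V a = fmap U V b := by
  intro a b hab
  rw [QuotientGroup.leftRel_apply] at hab
  have h : ((a⁻¹ * b).1 : F × G).2 = ((a⁻¹ * b).2 : G × H).1 := hab
  simp only [Prod.fst_mul, Prod.snd_mul, Subgroup.coe_mul, Prod.fst_inv, Prod.snd_inv,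
    Subgroup.coe_inv, Prod.snd_mul] at h
  have h' : ((a.1 : F × G).2)⁻¹ * (b.1 : F × G).2 = ((a.2 : G × H).1)⁻¹ * (b.2 : G × H).1 := h
  show (a.1 : F × G).2 * ((a.2 : G × H).1)⁻¹ = (b.1 : F × G).2 * ((b.2 : G × H).1)⁻¹
  have hb : (b.1 : F × G).2 = (a.1 : F × G).2 * (((a.2 : G × H).1)⁻¹ * (b.2 : G × H).1) := by
    rw [← h']; group
  rw [hb]; group

open scoped Pointwise in
lemma fmap_mem (p : ↥U × ↥V) : fmap U V p ∈ (p2 U : Set G) * (p1 V : Set G) := by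
  refine Set.mul_mem_mul ?_ ?_
  · exact ⟨(p.1 : F × G), p.1.2, rfl⟩
  · exact inv_mem (⟨(p.2 : G × H), p.2.2, rfl⟩ : ((p.2 : G × H).1 ∈ p1 V))

open scoped Pointwise in
noncomputable def quotEquiv :
    ((↥U × ↥V) ⧸ Xsub U V) ≃ ↥((p2 U : Set G) * (p1 V : Set G)) := by
  refine Equiv.ofBijective (Quotient.lift (fun p => (⟨fmap U V p, fmap_mem U V p⟩ :
    ↥((p2 U : Set G) * (p1 V : Set G)))) ?_) ⟨?_, ?_⟩
  · intro a b hab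
    exact Subtype.ext (fmap_resp U V a b hab)
  · intro x y
    induction x using Quotient.ind
    induction y using Quotient.ind
    rename_i a b
    intro hxy
    have h : fmap U V a = fmap U V b := congrArg Subtype.val hxy
    refine Quotient.sound (QuotientGroup.leftRel_apply.mpr ?_)
    show ((a⁻¹ * b).1 : F × G).2 = ((a⁻¹ * b).2 : G × H).1
    have h' : (a.1 : F × G).2 * ((a.2 : G × H).1)⁻¹ =
        (b.1 : F × G).2 * ((b.2 : G × H).1)⁻¹ := h
    simp only [Subgroup.coe_mul, Subgroup.coe_inv, Prod.fst_mul, Prod.snd_mul,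
      Prod.fst_inv, Prod.snd_inv]
    have : ((a.1 : F × G).2)⁻¹ * (b.1 : F × G).2 = ((a.2 : G × H).1)⁻¹ * (b.2 : G × H).1 := by
      rw [inv_mul_eq_iff_eq_mul, ← mul_assoc, h']
      group
    exact this
  · rintro ⟨g, hg⟩
    rw [Set.mem_mul] at hg
    obtain ⟨x, hx, y, hy, rfl⟩ := hg
    obtain ⟨u, hu, hux⟩ := hx
    have hy' : y⁻¹ ∈ p1 V := inv_mem hy
    obtain ⟨v, hv, hvy⟩ := hy'
    refine ⟨Quotient.mk _ (⟨u, hu⟩, ⟨v, hv⟩), ?_⟩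
    apply Subtype.ext
    show fmap U V (⟨u, hu⟩, ⟨v, hv⟩) = x * y
    unfold fmap
    simp only
    rw [show (u : F × G).2 = x from hux, show (v : G × H).1 = y⁻¹ from hvy, inv_inv]

end Aux

open scoped Pointwise in
/-- `|U| · |V| = |p₂(U) · p₁(V)| · |k₂(U) ∩ k₁(V)| · |U * V|`. -/
theorem card_mul_card (F G H : Type*) [Group F] [Group G] [Group H]
    [Finite F] [Finite G] [Finite H]
    (U : Subgroup (F × G)) (V : Subgroup (G × H)) :
    Nat.card ↥U * Nat.card ↥V =
      Nat.card ↥((p2 U : Set G) * (p1 V : Set G)) * Nat.card ↥(k2 U ⊓ k1 V) *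
        Nat.card ↥(starProd U V) := by
  have h1 : Nat.card (↥U × ↥V) = Nat.card ↥U * Nat.card ↥V := Nat.card_prod _ _
  have h2 := Subgroup.card_eq_card_quotient_mul_card_subgroup (Xsub U V)
  have h3 : Nat.card ((↥U × ↥V) ⧸ Xsub U V) =
      Nat.card ↥((p2 U : Set G) * (p1 V : Set G)) := Nat.card_congr (quotEquiv U V)
  have h4 := card_Xsub U V
  rw [← h1, h2, h3, h4]
  ring


end SubgroupCat
end
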